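/- Let J : [0,1] → Mat_n(ℝ) solve J''(t) + R(t)J(t) = 0 with J(0) = 0 and J'(0) = I, where ‖R(t)‖ ≤ C for all t ∈ [0,1]. Then ‖J(1) − I‖ ≤ C·e^C. -/

import Mathlib

open scoped Topology

set_option maxHeartbeats 1000000 in
set_option synthInstance.maxHeartbeats 400000 in
/-- Matrices `Mat_n(ℝ)` with the operator norm, realized as continuous linear endomorphisms
of Euclidean space. If `J'' + R J = 0` on `[0,1]` with `J(0) = 0`, `J'(0) = I`, and
`‖R(t)‖ ≤ C`, then `‖J(1) − I‖ ≤ C e^C`. -/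
theorem stmt_3 {n : ℕ} (C : ℝ) (hC : 0 ≤ C)
    (R J J' : ℝ → (EuclideanSpace ℝ (Fin n) →L[ℝ] EuclideanSpace ℝ (Fin n)))
    (hRcont : ContinuousOn R (Set.Icc 0 1))
    (hRbound : ∀ t ∈ Set.Icc (0:ℝ) 1, ‖R t‖ ≤ C)
    (hJ : ∀ t ∈ Set.Icc (0:ℝ) 1, HasDerivAt J (J' t) t)
    (hJ' : ∀ t ∈ Set.Icc (0:ℝ) 1, HasDerivAt J' (-(R t * J t)) t)
    (hJ0 : J 0 = 0) (hJ'0 : J' 0 = 1) :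
    ‖J 1 - 1‖ ≤ C * Real.exp C := by
  set K := max 1 C with hKdef
  have hK1 : (1:ℝ) ≤ K := le_max_left _ _
  have hKC : C ≤ K := le_max_right _ _
  have hK0 : (0:ℝ) < K := lt_of_lt_of_le one_pos hK1
  -- Step 1: ‖J t‖ ≤ exp (K t) on [0,1]
  have step1 : ∀ t ∈ Set.Icc (0:ℝ) 1, ‖J t‖ ≤ Real.exp (K * t) := by
    have H := norm_le_gronwallBound_of_norm_deriv_right_le
      (f := fun t => (J t, J' t)) (f' := fun t => (J' t, -(R t * J t)))
      (δ := 1) (K := K) (ε := 0) (a := 0) (b := 1)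
      (fun t ht => (((hJ t ht).prodMk (hJ' t ht)).continuousAt).continuousWithinAt)
      (fun t ht => ((hJ t (Set.mem_Icc_of_Ico ht)).prodMk
        (hJ' t (Set.mem_Icc_of_Ico ht))).hasDerivWithinAt)
      (by
        show max ‖J 0‖ ‖J' 0‖ ≤ (1:ℝ)
        rw [hJ0, hJ'0, norm_zero]
        exact max_le (by norm_num) ContinuousLinearMap.norm_id_le)
      (by
        intro t ht
        have ht' := Set.mem_Icc_of_Ico ht
        show ‖((J' t, -(R t * J t)) :
            (_ →L[ℝ] _) × (_ →L[ℝ] _))‖ ≤ K * ‖(J t, J' t)‖ + 0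
        have hp : (0:ℝ) ≤ ‖(J t, J' t)‖ := norm_nonneg _
        have hfst : ‖J t‖ ≤ ‖(J t, J' t)‖ := by
          rw [Prod.norm_def]; exact le_max_left _ _
        have hsnd : ‖J' t‖ ≤ ‖(J t, J' t)‖ := by
          rw [Prod.norm_def]; exact le_max_right _ _
        have h1 : ‖J' t‖ ≤ K * ‖(J t, J' t)‖ := by nlinarith
        have h2 : ‖-(R t * J t)‖ ≤ K * ‖(J t, J' t)‖ := by
          rw [norm_neg]
          have hRJ : ‖R t * J t‖ ≤ ‖R t‖ * ‖J t‖ := norm_mul_le _ _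
          have hR := hRbound t ht'
          have hRn : (0:ℝ) ≤ ‖R t‖ := norm_nonneg _
          have hJn : (0:ℝ) ≤ ‖J t‖ := norm_nonneg _
          nlinarith
        rw [Prod.norm_def]
        have := max_le h1 h2
        linarith)
    intro t ht
    have h := H t ht
    rw [gronwallBound_ε0] at h
    have hfst : ‖J t‖ ≤ ‖(J t, J' t)‖ := by
      rw [Prod.norm_def]; exact le_max_left _ _
    calc ‖J t‖ ≤ ‖(J t, J' t)‖ := hfst
      _ ≤ 1 * Real.exp (K * (t - 0)) := h
      _ = Real.exp (K * t) := by ring_nf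
  -- Step 2: ‖J' t - 1‖ ≤ C/K * (exp (K t) - 1)
  have step2 : ∀ t ∈ Set.Icc (0:ℝ) 1, ‖J' t - 1‖ ≤ C / K * (Real.exp (K * t) - 1) := by
    have hB : ∀ x : ℝ, HasDerivAt (fun t => C / K * (Real.exp (K * t) - 1))
        (C * Real.exp (K * x)) x := by
      intro x
      have h1 : HasDerivAt (fun t : ℝ => K * t) K x := by
        simpa using (hasDerivAt_id x).const_mul K
      have h2 : HasDerivAt (fun t : ℝ => Real.exp (K * t)) (Real.exp (K * x) * K) x :=
        (Real.hasDerivAt_exp (K * x)).comp x h1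
      have h3 := ((h2.sub_const 1).const_mul (C / K))
      refine h3.congr_deriv ?_
      field_simp
    have H := image_norm_le_of_norm_deriv_right_le_deriv_boundary
      (f := fun t => J' t - 1) (f' := fun t => -(R t * J t)) (a := 0) (b := 1)
      (fun t ht => (((hJ' t ht).sub_const 1).continuousAt).continuousWithinAt)
      (fun t ht => ((hJ' t (Set.mem_Icc_of_Ico ht)).sub_const 1).hasDerivWithinAt)
      (B := fun t => C / K * (Real.exp (K * t) - 1)) (B' := fun t => C * Real.exp (K * t))
      (by
        show ‖J' 0 - 1‖ ≤ C / K * (Real.exp (K * 0) - 1)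
        rw [hJ'0, sub_self, norm_zero, mul_zero, Real.exp_zero, sub_self, mul_zero])
      hB
      (by
        intro t ht
        have ht' := Set.mem_Icc_of_Ico ht
        show ‖-(R t * J t)‖ ≤ C * Real.exp (K * t)
        rw [norm_neg]
        have hRJ : ‖R t * J t‖ ≤ ‖R t‖ * ‖J t‖ := norm_mul_le _ _
        have hR := hRbound t ht'
        have hJb := step1 t ht'
        have hRn : (0:ℝ) ≤ ‖R t‖ := norm_nonneg _
        have hJn : (0:ℝ) ≤ ‖J t‖ := norm_nonneg _
        have he : (0:ℝ) < Real.exp (K * t) := Real.exp_pos _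
        nlinarith)
    exact fun t ht => H ht
  -- Step 3
  have step3 : ‖J 1 - (1:ℝ) • (1 : EuclideanSpace ℝ (Fin n) →L[ℝ] EuclideanSpace ℝ (Fin n))‖
      ≤ C / K ^ 2 * (Real.exp (K * 1) - 1) - C / K * 1 := by
    have hB : ∀ x : ℝ, HasDerivAt
        (fun t => C / K ^ 2 * (Real.exp (K * t) - 1) - C / K * t)
        (C / K * (Real.exp (K * x) - 1)) x := by
      intro x
      have h1 : HasDerivAt (fun t : ℝ => K * t) K x := by
        simpa using (hasDerivAt_id x).const_mul K
      have h2 : HasDerivAt (fun t : ℝ => Real.exp (K * t)) (Real.exp (K * x) * K) x :=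
        (Real.hasDerivAt_exp (K * x)).comp x h1
      have h4 : HasDerivAt (fun t : ℝ => C / K * t) (C / K) x := by
        simpa using (hasDerivAt_id x).const_mul (C / K)
      have h3 := ((h2.sub_const 1).const_mul (C / K ^ 2)).sub h4
      refine h3.congr_deriv ?_
      field_simp
    have hderiv : ∀ t : ℝ, HasDerivAt
        (fun s : ℝ => s • (1 : EuclideanSpace ℝ (Fin n) →L[ℝ] EuclideanSpace ℝ (Fin n)))
        (1 : EuclideanSpace ℝ (Fin n) →L[ℝ] EuclideanSpace ℝ (Fin n)) t := by
      intro t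
      simpa using (hasDerivAt_id t).smul_const
        (1 : EuclideanSpace ℝ (Fin n) →L[ℝ] EuclideanSpace ℝ (Fin n))
    have H := image_norm_le_of_norm_deriv_right_le_deriv_boundary
      (f := fun t => J t - t • (1 : EuclideanSpace ℝ (Fin n) →L[ℝ] EuclideanSpace ℝ (Fin n)))
      (f' := fun t => J' t - 1) (a := 0) (b := 1)
      (fun t ht => (((hJ t ht).sub (hderiv t)).continuousAt).continuousWithinAt)
      (fun t ht => ((hJ t (Set.mem_Icc_of_Ico ht)).sub (hderiv t)).hasDerivWithinAt)
      (B := fun t => C / K ^ 2 * (Real.exp (K * t) - 1) - C / K * t)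
      (B' := fun t => C / K * (Real.exp (K * t) - 1))
      (by
        have hz : J 0 - (0:ℝ) • (1 : EuclideanSpace ℝ (Fin n) →L[ℝ] EuclideanSpace ℝ (Fin n))
            = 0 := by
          rw [hJ0, zero_sub, neg_eq_zero]
          ext x
          simp
        show ‖J 0 - (0:ℝ) • (1 : EuclideanSpace ℝ (Fin n) →L[ℝ] EuclideanSpace ℝ (Fin n))‖
          ≤ C / K ^ 2 * (Real.exp (K * 0) - 1) - C / K * 0
        rw [hz, norm_zero, mul_zero, Real.exp_zero, sub_self, mul_zero, mul_zero, sub_zero])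
      hB
      (fun t ht => step2 t (Set.mem_Icc_of_Ico ht))
    exact H (by norm_num : (1:ℝ) ∈ Set.Icc (0:ℝ) 1)
  rw [one_smul] at step3
  -- Final arithmetic
  have hfin : C / K ^ 2 * (Real.exp (K * 1) - 1) - C / K * 1 ≤ C * Real.exp C := by
    rw [mul_one, mul_one]
    rcases le_total C 1 with h | h
    · have hK : K = 1 := max_eq_left h
      rw [hK]
      have he : Real.exp 1 < 3 := by
        have := Real.exp_one_lt_d9
        linarith
      have h1 : (1:ℝ) ≤ Real.exp C := Real.one_le_exp hC
      have he0 : (0:ℝ) < Real.exp 1 := Real.exp_pos _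
      norm_num
      nlinarith
    · have hK : K = C := max_eq_right h
      rw [hK]
      have hC1 : (0:ℝ) < C := lt_of_lt_of_le one_pos h
      have he1 : (1:ℝ) ≤ Real.exp C := Real.one_le_exp hC
      have hdiv1 : C / C ^ 2 ≤ 1 := by
        rw [div_le_one (by positivity)]
        nlinarith
      have h2 : C / C ^ 2 * (Real.exp C - 1) ≤ Real.exp C - 1 := by
        nlinarith
      have h3 : C / C = 1 := div_self (ne_of_gt hC1)
      rw [h3]
      nlinarith
  linarith
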